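/- Let f ∈ F_{μ,L}(ℝⁿ) with minimizer x_*, let 0 ≤ ε ≤ 2μ/(L+μ), and let 0 ≤ γ ≤ (2μ − ε(L+μ))/((1−ε)μ(L+μ)). If x₁ = x₀ − γd where ‖d − g(x₀)‖ ≤ ε‖g(x₀)‖, then ‖x₁ − x_*‖ ≤ (1 − (1−ε)μγ)·‖x₀ − x_*‖. -/

import Mathlib

open scoped RealInnerProductSpace
open Set
set_option maxHeartbeats 1000000 in
lemma scalar_key (μ L ε γ rr s c : ℝ) (hμ : 0 < μ) (hμL : μ < L) (hrr : 0 ≤ rr) (hs : 0 ≤ s)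
    (hint : μ*L*rr^2 + s^2 ≤ (μ+L)*c) (hcs : c ≤ s*rr)
    (hε0 : 0 ≤ ε) (hε1 : ε*(L+μ) ≤ 2*μ) (hγ0 : 0 ≤ γ)
    (hγ1 : γ*((1-ε)*μ*(L+μ)) ≤ 2*μ - ε*(L+μ)) :
    γ*ε*s ≤ (1-(1-ε)*μ*γ)*rr ∧
      rr^2 - 2*γ*c + γ^2*s^2 ≤ ((1-(1-ε)*μ*γ)*rr - γ*ε*s)^2 := by
  have hLμ : (0:ℝ) < L - μ := by linarith
  have hLμ' : (0:ℝ) < L + μ := by linarith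
  have hε' : ε < 1 := by nlinarith
  have hcon : 0 ≤ (s - μ*rr) * (L*rr - s) := by nlinarith [mul_nonneg hs hrr]
  have hsL : s ≤ L*rr := by nlinarith [hcon, mul_nonneg hLμ.le hrr]
  have hT : 0 ≤ 2*μ - ε*(μ+L) - μ*γ*(1-ε)*(μ+L) := by nlinarith [hγ1]
  have hΛ : 0 ≤ 2*γ*(2*μ - ε*(μ+L) - μ*γ*(1-ε)*(μ+L)) :=
    mul_nonneg (by linarith) hT
  have h2b : 0 ≤ 2 - γ*(1-ε^2)*(μ+L) := by
    nlinarith [mul_le_mul_of_nonneg_left (show μ*γ*(1-ε)*(μ+L) ≤ 2*μ - ε*(μ+L) by linarith)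
        (show (0:ℝ) ≤ 1 + ε by linarith),
      mul_nonneg hε0 hLμ.le, mul_nonneg (mul_nonneg hε0 hε0) hLμ'.le]
  have hK : 0 ≤ 2*γ*(2*μ - ε*(μ+L) - μ*γ*(1-ε)*(μ+L))
      - (L-μ)*(γ^2*(1-ε^2)*(μ+L) - 2*γ) := by
    nlinarith [mul_nonneg hγ0 hT, mul_nonneg (mul_nonneg hγ0 hLμ.le) h2b]
  constructor
  · have hγ2 : γ*(ε*L + (1-ε)*μ) ≤ 1 := by
      nlinarith [mul_le_mul_of_nonneg_right hγ1 (show 0 ≤ ε*L + (1-ε)*μ by nlinarith),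
        mul_nonneg (sub_nonneg.mpr hμL.le)
          (show (0:ℝ) ≤ μ*(1-ε)^2 + ε^2*L by nlinarith [sq_nonneg (1-ε), sq_nonneg ε]),
        mul_pos (mul_pos (show (0:ℝ) < 1-ε by linarith) hμ) hLμ']
    have e1 := mul_le_mul_of_nonneg_left hsL (mul_nonneg hγ0 hε0)
    have e2 := mul_nonneg (sub_nonneg.mpr hγ2) hrr
    nlinarith [e1, e2]
  · set X := ((1-(1-ε)*μ*γ)*rr - γ*ε*s)^2 - (rr^2 - 2*γ*c + γ^2*s^2) with hX
    have key : (L-μ)*((μ+L)*X)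
        = 2*γ*(2*μ - ε*(μ+L) - μ*γ*(1-ε)*(μ+L)) * ((s - μ*rr) * (L*rr - s))
          + (2*γ*(2*μ - ε*(μ+L) - μ*γ*(1-ε)*(μ+L))
              - (L-μ)*(γ^2*(1-ε^2)*(μ+L) - 2*γ)) * (s - μ*rr)^2
          + 2*γ*(L-μ) * ((μ+L)*c - (μ*L*rr^2 + s^2)) := by
      rw [hX]; ring
    have hprod : 0 ≤ (L-μ)*((μ+L)*X) := by
      rw [key]
      have t1 := mul_nonneg hΛ hcon
      have t2 := mul_nonneg hK (sq_nonneg (s - μ*rr))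
      linarith [t1, t2, mul_nonneg (mul_nonneg (by linarith : (0:ℝ) ≤ 2*γ) hLμ.le)
          (sub_nonneg.mpr hint)]
    have h2 : 0 ≤ X := by nlinarith [hprod, mul_pos hLμ hLμ']
    rw [hX] at h2; linarith

variable {E : Type*} [NormedAddCommGroup E] [InnerProductSpace ℝ E] [CompleteSpace E]

lemma conv_ineq (F : E → ℝ) (hconv : ConvexOn ℝ Set.univ F) {x y : E} {G : E →L[ℝ] ℝ}
    (hG : HasFDerivAt F G x) : F x + G (y - x) ≤ F y := by
  set φ : ℝ → ℝ := fun t => F (x + t • (y - x)) with hφdef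
  have hφ : ConvexOn ℝ Set.univ φ := by
    have := hconv.comp_affineMap
      (AffineMap.const ℝ ℝ x + (LinearMap.toAffineMap (LinearMap.smulRight (LinearMap.id) (y - x))))
    simpa [Function.comp_def, hφdef, Pi.add_apply] using this
  have hline : HasDerivAt (fun t : ℝ => x + t • (y - x)) (y - x) 0 := by
    simpa using ((hasDerivAt_id (0:ℝ)).smul_const (y - x)).const_add x
  have hφ' : HasDerivAt φ (G (y - x)) 0 := by
    have hG' : HasFDerivAt F G (x + (0:ℝ) • (y - x)) := by simpa using hG
    exact hG'.comp_hasDerivAt 0 hline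
  have := hφ.le_slope_of_hasDerivAt (mem_univ (0:ℝ)) (mem_univ (1:ℝ)) zero_lt_one hφ'
  have h0 : φ 0 = F x := by simp [hφdef]
  have h1 : φ 1 = F y := by simp [hφdef]
  rw [slope_def_field, h0, h1] at this
  simp only [map_sub] at this ⊢
  linarith

lemma grad_fderiv (f : E → ℝ) (hdiff : Differentiable ℝ f) (x : E) :
    HasFDerivAt f (InnerProductSpace.toDual ℝ E (gradient f x)) x :=
  hasGradientAt_iff_hasFDerivAt.mp (hdiff x).hasGradientAt

/-- strong convexity gradient inequality -/
lemma sc_ineq (f : E → ℝ) (μ : ℝ) (hdiff : Differentiable ℝ f)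
    (hsc : ConvexOn ℝ Set.univ (fun x => f x - μ / 2 * ‖x‖ ^ 2)) (x y : E) :
    f x + ⟪gradient f x, y - x⟫ + μ/2 * ‖y - x‖^2 ≤ f y := by
  have hn : HasFDerivAt (fun x : E => μ/2 * ‖x‖^2) ((μ/2) • (2 • (innerSL ℝ x))) x := by
    exact ((hasStrictFDerivAt_norm_sq x).hasFDerivAt).const_mul (μ/2)
  have hF := (grad_fderiv f hdiff x).sub hn
  have := conv_ineq _ hsc hF (y := y)
  simp only [ContinuousLinearMap.sub_apply, ContinuousLinearMap.smul_apply, innerSL_apply_apply,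
    InnerProductSpace.toDual_apply_apply, smul_eq_mul, nsmul_eq_mul, Nat.cast_ofNat] at this
  have e1 : ‖y - x‖^2 = ‖y‖^2 - 2*⟪y,x⟫ + ‖x‖^2 := by
    rw [@norm_sub_sq_real]
  have e2 : ⟪x, y - x⟫ = ⟪x,y⟫ - ‖x‖^2 := by
    rw [inner_sub_right, real_inner_self_eq_norm_sq]
  have ec : ⟪y,x⟫ = ⟪x,y⟫ := real_inner_comm x y
  have e1' : μ/2*‖y-x‖^2 = μ/2*(‖y‖^2 - 2*⟪x,y⟫ + ‖x‖^2) := by rw [e1, ec]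
  have e2' : μ/2*(2*⟪x,y-x⟫) = μ/2*(2*(⟪x,y⟫ - ‖x‖^2)) := by rw [e2]
  linarith [this, e1', e2']

/-- descent lemma from Lipschitz gradient -/
lemma descent (f : E → ℝ) (L : ℝ) (hdiff : Differentiable ℝ f)
    (hlip : ∀ x y, ‖gradient f x - gradient f y‖ ≤ L * ‖x - y‖) (x y : E) :
    f y ≤ f x + ⟪gradient f x, y - x⟫ + L/2 * ‖y - x‖^2 := by
  set u := y - x with hu
  set ψ : ℝ → ℝ := fun t => f (x + t • u) - t * ⟪gradient f x, u⟫ - L/2 * t^2 * ‖u‖^2 with hψ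
  have hψd : ∀ t : ℝ, HasDerivAt ψ
      (⟪gradient f (x + t • u), u⟫ - ⟪gradient f x, u⟫ - L/2*(2*t)*‖u‖^2) t := by
    intro t
    have hline : HasDerivAt (fun s : ℝ => x + s • u) u t := by
      simpa using ((hasDerivAt_id t).smul_const u).const_add x
    have h1 : HasDerivAt (fun s : ℝ => f (x + s • u)) ⟪gradient f (x + t•u), u⟫ t := by
      have := (grad_fderiv f hdiff (x + t•u)).comp_hasDerivAt t hline
      simpa [Function.comp_def] using this
    have h2 : HasDerivAt (fun s : ℝ => s * ⟪gradient f x, u⟫) ⟪gradient f x, u⟫ t := by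
      simpa using (hasDerivAt_id t).mul_const ⟪gradient f x, u⟫
    have h3 : HasDerivAt (fun s : ℝ => L/2 * s^2 * ‖u‖^2) (L/2*(2*t)*‖u‖^2) t := by
      have := ((hasDerivAt_pow 2 t).const_mul (L/2)).mul_const (‖u‖^2)
      rw [show L/2*(2*t)*‖u‖^2 = L/2*(((2:ℕ):ℝ)*t^(2-1))*‖u‖^2 by norm_num]
      exact this
    exact (h1.sub h2).sub h3
  have anti : AntitoneOn ψ (Icc (0:ℝ) 1) := by
    apply antitoneOn_of_deriv_nonpos (convex_Icc 0 1)
    · exact fun t _ => ((hψd t).differentiableAt).continuousAt.continuousWithinAt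
    · exact fun t _ => ((hψd t).differentiableAt).differentiableWithinAt
    · intro t ht
      rw [interior_Icc] at ht
      rw [(hψd t).deriv]
      have hb : ⟪gradient f (x + t•u) - gradient f x, u⟫ ≤ L*t*‖u‖^2 := by
        calc ⟪gradient f (x + t•u) - gradient f x, u⟫
            ≤ ‖gradient f (x + t•u) - gradient f x‖ * ‖u‖ := real_inner_le_norm _ _
          _ ≤ (L * ‖(x + t•u) - x‖) * ‖u‖ :=
              mul_le_mul_of_nonneg_right (hlip _ _) (norm_nonneg _)
          _ = L*t*‖u‖^2 := by
              rw [show (x + t•u) - x = t•u by abel, norm_smul]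
              simp [abs_of_pos ht.1]
              ring
      rw [inner_sub_left] at hb; linarith
  have h01 := anti (left_mem_Icc.mpr zero_le_one) (right_mem_Icc.mpr zero_le_one) zero_le_one
  have e0 : ψ 0 = f x := by simp [hψ]
  have e1 : ψ 1 = f y - ⟪gradient f x, u⟫ - L/2 * ‖u‖^2 := by
    simp [hψ, hu]
  rw [e0, e1] at h01
  linarith

lemma interp (f : E → ℝ) (μ L : ℝ) (hμ : 0 < μ) (hμL : μ < L)
    (hdiff : Differentiable ℝ f)
    (hsc : ConvexOn ℝ Set.univ (fun x => f x - μ / 2 * ‖x‖ ^ 2))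
    (hlip : ∀ x y, ‖gradient f x - gradient f y‖ ≤ L * ‖x - y‖) (x y : E) :
    μ*L*‖y-x‖^2 + ‖gradient f y - gradient f x‖^2
      ≤ (μ+L) * ⟪gradient f y - gradient f x, y - x⟫ := by
  have hM : (0:ℝ) < L - μ := by linarith
  have hMK : (L-μ) * (L-μ)⁻¹ = 1 := mul_inv_cancel₀ hM.ne'
  have key : ∀ a b : E, f a + ⟪gradient f a, b - a⟫ + μ/2*‖b-a‖^2
      + 1/(2*(L-μ)) * ‖(gradient f b - gradient f a) - μ•(b-a)‖^2 ≤ f b := by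
    intro a b
    set K : ℝ := (L-μ)⁻¹ with hKdef
    set u : E := (gradient f b - gradient f a) - μ•(b-a) with hudef
    set z : E := b - K • u with hzdef
    have h1 := sc_ineq f μ hdiff hsc a z
    have h2 := descent f L hdiff hlip b z
    have hz_a : z - a = (b - a) - K • u := by rw [hzdef]; abel
    have hz_b : z - b = -(K • u) := by rw [hzdef]; abel
    have i1 : ⟪gradient f a, z - a⟫ = ⟪gradient f a, b - a⟫ - K*⟪gradient f a, u⟫ := by
      rw [hz_a, inner_sub_right, real_inner_smul_right]
    have i2 : ‖z - a‖^2 = ‖b-a‖^2 - 2*(K*⟪b-a, u⟫) + K^2*‖u‖^2 := by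
      rw [hz_a, @norm_sub_sq_real, real_inner_smul_right, norm_smul, Real.norm_eq_abs,
        abs_of_pos (inv_pos.mpr hM), mul_pow]
    have i3 : ⟪gradient f b, z - b⟫ = -(K*⟪gradient f b, u⟫) := by
      rw [hz_b, inner_neg_right, real_inner_smul_right]
    have i4 : ‖z - b‖^2 = K^2*‖u‖^2 := by
      rw [hz_b, norm_neg, norm_smul, Real.norm_eq_abs, abs_of_pos (inv_pos.mpr hM), mul_pow]
    have i5 : ⟪gradient f b, u⟫ - ⟪gradient f a, u⟫ - μ*⟪b-a, u⟫ = ‖u‖^2 := by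
      rw [← real_inner_self_eq_norm_sq u]
      nth_rewrite 4 [hudef]
      rw [inner_sub_left, inner_sub_left, real_inner_smul_left]
      simp only [inner_sub_left]
      try ring
    have i5K : K*⟪gradient f b, u⟫ - K*⟪gradient f a, u⟫ - μ*(K*⟪b-a, u⟫) = K*‖u‖^2 := by
      linear_combination K * i5
    have e6 : (L/2 - μ/2)*(K^2*‖u‖^2) = 1/2*(K*‖u‖^2) := by
      linear_combination (K*‖u‖^2/2) * hMK
    have e7 : 1/(2*(L-μ))*‖u‖^2 = 1/2*(K*‖u‖^2) := by
      rw [hKdef]; field_simp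
    rw [i1, i2] at h1
    rw [i3, i4] at h2
    linarith [h1, h2, i5K, e6, e7]
  have k1 := key x y
  have k2 := key y x
  set u : E := (gradient f y - gradient f x) - μ•(y-x) with hudef
  have hu2 : (gradient f x - gradient f y) - μ•(x-y) = -u := by rw [hudef]; abel_nf; module
  rw [hu2] at k2
  have en : ‖x - y‖ = ‖y - x‖ := norm_sub_rev x y
  have eu : ‖-u‖ = ‖u‖ := norm_neg u
  have ei : ⟪gradient f y, x - y⟫ = -⟪gradient f y, y - x⟫ := by
    rw [show x - y = -(y-x) by abel, inner_neg_right]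
  rw [en, eu, ei] at k2
  -- combined: ⟪gy - gx, y - x⟫ ≥ μ‖y-x‖² + 1/(L-μ)‖u‖²
  have hq : μ*‖y-x‖^2 + (L-μ)⁻¹*‖u‖^2 ≤ ⟪gradient f y - gradient f x, y - x⟫ := by
    rw [inner_sub_left]
    have : 1/(2*(L-μ))*‖u‖^2 + 1/(2*(L-μ))*‖u‖^2 = (L-μ)⁻¹*‖u‖^2 := by field_simp; ring
    linarith [k1, k2]
  have hW : ‖u‖^2 = ‖gradient f y - gradient f x‖^2
      - 2*(μ*⟪gradient f y - gradient f x, y - x⟫) + μ^2*‖y-x‖^2 := by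
    rw [hudef, @norm_sub_sq_real, real_inner_smul_right, norm_smul, Real.norm_eq_abs,
      abs_of_pos hμ, mul_pow]
  have e8 : (L-μ)*((L-μ)⁻¹*‖u‖^2) = ‖u‖^2 := by
    rw [← mul_assoc, hMK, one_mul]
  have := mul_le_mul_of_nonneg_left hq hM.le
  nlinarith [this, hW, e8]


/-- Inexact gradient method with fixed step length on `f ∈ F_{μ,L}(ℝⁿ)`:
worst-case contraction of the distance to the minimizer. -/
theorem stmt8 {n : ℕ} (f : EuclideanSpace ℝ (Fin n) → ℝ) (μ L : ℝ)
    (hμ : 0 < μ) (hμL : μ < L)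
    (hdiff : Differentiable ℝ f)
    -- μ-strong convexity
    (hsc : ConvexOn ℝ Set.univ (fun x => f x - μ / 2 * ‖x‖ ^ 2))
    -- L-Lipschitz gradient
    (hlip : ∀ x y, ‖gradient f x - gradient f y‖ ≤ L * ‖x - y‖)
    (xstar x₀ x₁ d : EuclideanSpace ℝ (Fin n)) (γ ε : ℝ)
    (hmin : ∀ x, f xstar ≤ f x)
    (hε0 : 0 ≤ ε) (hε1 : ε ≤ 2 * μ / (L + μ))
    (hγ0 : 0 ≤ γ) (hγ1 : γ ≤ (2 * μ - ε * (L + μ)) / ((1 - ε) * μ * (L + μ)))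
    (hstep : x₁ = x₀ - γ • d)
    (hd : ‖d - gradient f x₀‖ ≤ ε * ‖gradient f x₀‖) :
    ‖x₁ - xstar‖ ≤ (1 - (1 - ε) * μ * γ) * ‖x₀ - xstar‖ := by
  have hLμ' : (0:ℝ) < L + μ := by linarith
  -- gradient vanishes at the minimizer
  have hloc : IsLocalMin f xstar := Filter.Eventually.of_forall hmin
  have hg0 : gradient f xstar = 0 := by
    have h := hloc.hasFDerivAt_eq_zero (grad_fderiv f hdiff xstar)
    apply (InnerProductSpace.toDual ℝ (EuclideanSpace ℝ (Fin n))).injective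
    simpa using h
  set g₀ : EuclideanSpace ℝ (Fin n) := gradient f x₀ with hg₀
  set r : EuclideanSpace ℝ (Fin n) := x₀ - xstar with hr
  have hint : μ*L*‖r‖^2 + ‖g₀‖^2 ≤ (μ+L) * ⟪g₀, r⟫ := by
    have := interp f μ L hμ hμL hdiff hsc hlip xstar x₀
    rwa [hg0, sub_zero] at this
  have hcs : ⟪g₀, r⟫ ≤ ‖g₀‖ * ‖r‖ := real_inner_le_norm g₀ r
  have hε1' : ε*(L+μ) ≤ 2*μ := (le_div_iff₀ hLμ').mp hε1
  have hεlt : ε < 1 := by nlinarith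
  have hγ1' : γ*((1-ε)*μ*(L+μ)) ≤ 2*μ - ε*(L+μ) := by
    have hden : (0:ℝ) < (1-ε)*μ*(L+μ) := mul_pos (mul_pos (by linarith) hμ) hLμ'
    exact (le_div_iff₀ hden).mp hγ1
  obtain ⟨h1s, h2s⟩ := scalar_key μ L ε γ ‖r‖ ‖g₀‖ ⟪g₀, r⟫ hμ hμL (norm_nonneg r)
    (norm_nonneg g₀) hint hcs hε0 hε1' hγ0 hγ1'
  -- vector decomposition
  have hdecomp : x₁ - xstar = (r - γ • g₀) - γ • (d - g₀) := by
    rw [hstep, hr]; module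
  have htri : ‖x₁ - xstar‖ ≤ ‖r - γ • g₀‖ + γ * (ε * ‖g₀‖) := by
    rw [hdecomp]
    refine (norm_sub_le _ _).trans ?_
    gcongr
    rw [norm_smul, Real.norm_eq_abs, abs_of_nonneg hγ0]
    exact mul_le_mul_of_nonneg_left hd hγ0
  have hsq : ‖r - γ • g₀‖^2 = ‖r‖^2 - 2*γ*⟪g₀, r⟫ + γ^2*‖g₀‖^2 := by
    rw [@norm_sub_sq_real, real_inner_smul_right, norm_smul, Real.norm_eq_abs,
      abs_of_nonneg hγ0, mul_pow, real_inner_comm r g₀]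
    ring
  have hmain : ‖r - γ • g₀‖ ≤ (1-(1-ε)*μ*γ)*‖r‖ - γ*ε*‖g₀‖ := by
    nlinarith [hsq, h2s, norm_nonneg (r - γ • g₀), h1s]
  calc ‖x₁ - xstar‖ ≤ ‖r - γ • g₀‖ + γ * (ε * ‖g₀‖) := htri
    _ ≤ (1-(1-ε)*μ*γ)*‖r‖ - γ*ε*‖g₀‖ + γ * (ε * ‖g₀‖) := by linarith
    _ = (1 - (1 - ε) * μ * γ) * ‖x₀ - xstar‖ := by rw [hr]; ring
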